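/- If x ⪯ y (x is weakly majorized by y) and x' ≺ y' (strictly weakly majorized), then the concatenation (x, x') is strictly weakly majorized by (y, y'). -/

import Mathlib

open Finset

/-- The ascending arrangement of a finite multiset of reals. -/
noncomputable def asc (s : Multiset ℝ) : List ℝ := s.sort (· ≤ ·)

/-- Sum of the `m` smallest entries of `s`. -/
noncomputable def ascTake (s : Multiset ℝ) (m : ℕ) : ℝ := ((asc s).take m).sum

/-- `WeakMaj a b` : `a` weakly majorizes `b`, i.e. for each `m` the sum of the `m`
smallest entries of `a` is at most the sum of the `m` smallest entries of `b`. -/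
def WeakMaj (a b : Multiset ℝ) : Prop := ∀ m : ℕ, ascTake a m ≤ ascTake b m

noncomputable def gfun (s : Multiset ℝ) (t : ℝ) : ℝ := (s.map (fun a => min a t)).sum

lemma asc_sorted (s : Multiset ℝ) : (asc s).Pairwise (· ≤ ·) := s.pairwise_sort _

lemma asc_length (s : Multiset ℝ) : (asc s).length = Multiset.card s := s.length_sort _

lemma asc_coe (s : Multiset ℝ) : ((asc s : List ℝ) : Multiset ℝ) = s := s.sort_eq _

lemma asc_sum (s : Multiset ℝ) : (asc s).sum = s.sum := by
  conv_rhs => rw [← asc_coe s]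
  simp

lemma g_list (s : Multiset ℝ) (t : ℝ) :
    gfun s t = ((asc s).map (fun a => min a t)).sum := by
  conv_lhs => rw [gfun, ← asc_coe s]
  simp

lemma split_sum (t : ℝ) (l1 l2 : List ℝ) (h1 : ∀ a ∈ l1, a ≤ t) (h2 : ∀ a ∈ l2, t ≤ a) :
    ((l1 ++ l2).map (fun a => min a t)).sum = l1.sum + (l2.length : ℝ) * t := by
  rw [List.map_append, List.sum_append]
  congr 1
  · have : l1.map (fun a => min a t) = l1.map id := by
      apply List.map_congr_left
      intro a ha
      simp [min_eq_left (h1 a ha)]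
    rw [this, List.map_id]
  · have : l2.map (fun a => min a t) = l2.map (fun _ => t) := by
      apply List.map_congr_left
      intro a ha
      simp [min_eq_right (h2 a ha)]
    rw [this]
    simp [List.map_const', mul_comm]

lemma L1 (s : Multiset ℝ) (m : ℕ) (t : ℝ) (hm : m ≤ Multiset.card s) :
    gfun s t ≤ ascTake s m + ((Multiset.card s - m : ℕ) : ℝ) * t := by
  have hsplit : asc s = (asc s).take m ++ (asc s).drop m := (List.take_append_drop _ _).symm
  rw [g_list]
  conv_lhs => rw [hsplit]
  rw [List.map_append, List.sum_append]
  have hA : (((asc s).take m).map (fun a => min a t)).sum ≤ ascTake s m := by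
    rw [ascTake]
    calc (((asc s).take m).map (fun a => min a t)).sum
        ≤ (((asc s).take m).map id).sum := by
          apply List.sum_le_sum
          intro a _
          exact min_le_left a t
      _ = ((asc s).take m).sum := by rw [List.map_id]
  have hB : (((asc s).drop m).map (fun a => min a t)).sum
      ≤ ((Multiset.card s - m : ℕ) : ℝ) * t := by
    have := List.sum_le_card_nsmul (((asc s).drop m).map (fun a => min a t)) t ?_
    · simpa [List.length_drop, asc_length, nsmul_eq_mul] using this
    · intro a ha
      simp only [List.mem_map] at ha
      obtain ⟨b, _, rfl⟩ := ha
      exact min_le_right b t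
  linarith

lemma L2 (s : Multiset ℝ) (m : ℕ) (hm : m < (asc s).length) :
    gfun s ((asc s).get ⟨m, hm⟩) =
      ascTake s m + ((Multiset.card s - m : ℕ) : ℝ) * (asc s).get ⟨m, hm⟩ := by
  set t := (asc s).get ⟨m, hm⟩ with ht
  have hsplit : asc s = (asc s).take m ++ (asc s).drop m := (List.take_append_drop _ _).symm
  rw [g_list]
  conv_lhs => rw [hsplit]
  rw [split_sum t _ _ ?_ ?_]
  · rw [ascTake, List.length_drop, asc_length]
  · intro a ha
    rw [List.mem_iff_get] at ha
    obtain ⟨⟨i, hi⟩, rfl⟩ := ha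
    rw [List.get_eq_getElem, List.getElem_take]
    have him : i < m := lt_of_lt_of_le hi (by simp [List.length_take])
    exact (asc_sorted s).rel_get_of_lt (by simpa using him)
  · intro a ha
    rw [List.mem_iff_get] at ha
    obtain ⟨⟨i, hi⟩, rfl⟩ := ha
    rw [List.get_eq_getElem, List.getElem_drop]
    exact (asc_sorted s).rel_get_of_le (by simp [Fin.le_def])

lemma L2' (s : Multiset ℝ) (t : ℝ) :
    ∃ m ≤ Multiset.card s,
      gfun s t = ascTake s m + ((Multiset.card s - m : ℕ) : ℝ) * t := by
  classical
  set p : ℝ → Bool := fun a => decide (a ≤ t) with hp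
  set l := asc s with hl
  refine ⟨(l.takeWhile p).length, ?_, ?_⟩
  · rw [← asc_length s]
    exact (l.takeWhile_prefix p).sublist.length_le
  · have hpre : l.take (l.takeWhile p).length = l.takeWhile p :=
      (List.prefix_iff_eq_take.mp (l.takeWhile_prefix p)).symm
    have hsplit : l = l.takeWhile p ++ l.dropWhile p := (l.takeWhile_append_dropWhile (p := p)).symm
    rw [g_list, ← hl]
    conv_lhs => rw [hsplit]
    rw [split_sum t _ _ ?_ ?_]
    · have hlen : (l.dropWhile p).length = Multiset.card s - (l.takeWhile p).length := by
        have := congrArg List.length hsplit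
        simp only [List.length_append] at this
        rw [asc_length] at this
        omega
      rw [ascTake, ← hl, hpre, hlen]
    · intro a ha
      have := List.mem_takeWhile_imp ha
      simpa [hp] using this
    · intro a ha
      have hsorted : (l.dropWhile p).Pairwise (· ≤ ·) :=
        (asc_sorted s).sublist (l.dropWhile_sublist p)
      rcases hd : l.dropWhile p with _ | ⟨b, rest⟩
      · rw [hd] at ha; simp at ha
      · have hb : ¬ (b ≤ t) := by
          have hb' := List.head_dropWhile_not p (l := l) (by simp [hd])
          have key : ∀ (l' : List ℝ) (h : l' ≠ []), l' = b :: rest → l'.head h = b := by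
            rintro _ _ rfl; rfl
          rw [key _ _ hd] at hb'
          simp only [hp] at hb'
          simpa using hb'
        rw [hd] at ha hsorted
        rcases List.mem_cons.mp ha with rfl | hmem
        · exact le_of_not_ge hb
        · exact le_trans (le_of_not_ge hb) (List.rel_of_pairwise_cons hsorted hmem)

lemma gfun_add (s s' : Multiset ℝ) (t : ℝ) :
    gfun (s + s') t = gfun s t + gfun s' t := by
  simp [gfun]

lemma gfun_mono (x y : Multiset ℝ) (hc : Multiset.card x = Multiset.card y)
    (h : WeakMaj y x) (t : ℝ) : gfun y t ≤ gfun x t := by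
  obtain ⟨m, hm, he⟩ := L2' x t
  have h1 : gfun y t ≤ ascTake y m + ((Multiset.card y - m : ℕ) : ℝ) * t :=
    L1 y m t (hc ▸ hm)
  have h2 : ascTake y m ≤ ascTake x m := h m
  rw [he]
  rw [← hc] at h1
  linarith

lemma gfun_big (s : Multiset ℝ) (t : ℝ) (h : ∀ a ∈ s, a ≤ t) : gfun s t = s.sum := by
  rw [gfun]
  have : s.map (fun a => min a t) = s.map id := by
    apply Multiset.map_congr rfl
    intro a ha
    simp [min_eq_left (h a ha)]
  rw [this, Multiset.map_id]

lemma ascTake_eq_sum (s : Multiset ℝ) (m : ℕ) (h : Multiset.card s ≤ m) :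
    ascTake s m = s.sum := by
  rw [ascTake, List.take_of_length_le (by rw [asc_length]; exact h), asc_sum]

lemma ascTake_strict (x' y' : Multiset ℝ)
    (hcard' : Multiset.card x' = Multiset.card y')
    (h2 : WeakMaj y' x') (h2s : asc y' ≠ asc x') :
    ∃ m ≤ Multiset.card y', ascTake y' m < ascTake x' m := by
  have hne : ∃ m, ascTake y' m ≠ ascTake x' m := by
    by_contra hall
    push_neg at hall
    apply h2s
    apply List.ext_get (by rw [asc_length, asc_length, hcard'])
    intro i hi hi'
    have hsucc : ∀ (l : List ℝ) (h : i < l.length),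
        l.get ⟨i, h⟩ = (l.take (i+1)).sum - (l.take i).sum := by
      intro l h
      rw [List.sum_take_succ l i h]
      simp
    rw [hsucc _ hi, hsucc _ hi']
    have e1 := hall i
    have e2 := hall (i + 1)
    rw [ascTake, ascTake] at e1 e2
    rw [e1, e2]
  obtain ⟨m, hm⟩ := hne
  rcases le_or_gt m (Multiset.card y') with hle | hgt
  · exact ⟨m, hle, lt_of_le_of_ne (h2 m) hm⟩
  · refine ⟨Multiset.card y', le_refl _, ?_⟩
    rw [ascTake_eq_sum y' m hgt.le, ascTake_eq_sum x' m (by omega)] at hm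
    have := h2 (Multiset.card y')
    rw [ascTake_eq_sum y' _ le_rfl, ascTake_eq_sum x' _ hcard'.le] at this ⊢
    exact lt_of_le_of_ne this hm

lemma gfun_strict (x' y' : Multiset ℝ)
    (hcard' : Multiset.card x' = Multiset.card y')
    (hx' : ∀ a ∈ x', (0:ℝ) ≤ a) (hy' : ∀ a ∈ y', (0:ℝ) ≤ a)
    (h2 : WeakMaj y' x') (h2s : asc y' ≠ asc x') :
    ∃ t, gfun y' t < gfun x' t := by
  obtain ⟨m, hm, hlt⟩ := ascTake_strict x' y' hcard' h2 h2s
  rcases lt_or_eq_of_le hm with hmlt | hmeq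
  · have hm' : m < (asc x').length := by rw [asc_length, hcard']; exact hmlt
    set t := (asc x').get ⟨m, hm'⟩ with ht
    refine ⟨t, ?_⟩
    have e := L2 x' m hm'
    have u := L1 y' m t hmlt.le
    rw [← ht] at e
    rw [e, hcard']
    linarith
  · set t := (x' + y').sum with ht
    have hnn : ∀ a ∈ x' + y', (0:ℝ) ≤ a := by
      intro a ha
      rcases Multiset.mem_add.mp ha with h | h
      exacts [hx' a h, hy' a h]
    have hbig : ∀ a ∈ x' + y', a ≤ t := fun a ha => Multiset.single_le_sum hnn a ha
    refine ⟨t, ?_⟩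
    rw [gfun_big y' t (fun a ha => hbig a (Multiset.mem_add.mpr (Or.inr ha))),
        gfun_big x' t (fun a ha => hbig a (Multiset.mem_add.mpr (Or.inl ha)))]
    rw [ascTake_eq_sum y' m hmeq.ge, ascTake_eq_sum x' m (by omega)] at hlt
    exact hlt

theorem stmt10 (x y x' y' : Multiset ℝ)
    (hcard : Multiset.card x = Multiset.card y)
    (hcard' : Multiset.card x' = Multiset.card y')
    (hx : ∀ a ∈ x, (0:ℝ) ≤ a) (hy : ∀ a ∈ y, (0:ℝ) ≤ a)
    (hx' : ∀ a ∈ x', (0:ℝ) ≤ a) (hy' : ∀ a ∈ y', (0:ℝ) ≤ a)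
    (h1 : WeakMaj y x) (h2 : WeakMaj y' x') (h2s : asc y' ≠ asc x') :
    WeakMaj (y + y') (x + x') ∧ asc (y + y') ≠ asc (x + x') := by
  have hN : Multiset.card (x + x') = Multiset.card (y + y') := by
    simp [hcard, hcard']
  have hG : ∀ t, gfun (y + y') t ≤ gfun (x + x') t := by
    intro t
    rw [gfun_add, gfun_add]
    exact add_le_add (gfun_mono x y hcard h1 t) (gfun_mono x' y' hcard' h2 t)
  constructor
  · intro m
    rcases lt_or_ge m (Multiset.card (y + y')) with hm | hm
    · have hm' : m < (asc (y + y')).length := by rw [asc_length]; exact hm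
      set t := (asc (y + y')).get ⟨m, hm'⟩ with ht
      have e := L2 (y + y') m hm'
      rw [← ht] at e
      have u := L1 (x + x') m t (by rw [hN]; exact hm.le)
      have := hG t
      rw [hN] at u
      linarith
    · rw [ascTake_eq_sum (y + y') m hm, ascTake_eq_sum (x + x') m (by omega)]
      set t := (x + x' + y + y').sum with ht
      have hnn : ∀ a ∈ x + x' + y + y', (0:ℝ) ≤ a := by
        intro a ha
        simp only [Multiset.mem_add] at ha
        rcases ha with ((h | h) | h) | h
        exacts [hx a h, hx' a h, hy a h, hy' a h]
      have hbig : ∀ a ∈ x + x' + y + y', a ≤ t := fun a ha =>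
        Multiset.single_le_sum hnn a ha
      have ey : gfun (y + y') t = (y + y').sum := by
        apply gfun_big
        intro a ha
        apply hbig
        simp only [Multiset.mem_add] at ha ⊢
        tauto
      have ex : gfun (x + x') t = (x + x').sum := by
        apply gfun_big
        intro a ha
        apply hbig
        simp only [Multiset.mem_add] at ha ⊢
        tauto
      rw [← ey, ← ex]
      exact hG t
  · intro hEq
    have hmeq : y + y' = x + x' := by
      have := congrArg (fun l : List ℝ => (l : Multiset ℝ)) hEq
      simpa [asc_coe] using this
    obtain ⟨t, htlt⟩ := gfun_strict x' y' hcard' hx' hy' h2 h2s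
    have h3 : gfun (y + y') t < gfun (x + x') t := by
      rw [gfun_add, gfun_add]
      have := gfun_mono x y hcard h1 t
      linarith
    rw [hmeq] at h3
    exact lt_irrefl _ h3
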